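/- Let (a_i,b_i)_{i=1}^s be a composition of positive integers, let (k_1,…,k_n) = (a_1+1, 1^{b_1−1}, …, a_s+1, 1^{b_s−1}) be the associated index (so n = b_1+⋯+b_s and k_1 ≥ 2). Then for every λ ∈ ℂ with |λ| < 1, the power series Σ_{l=0}^∞ [ Σ_{c_1+⋯+c_n=l, c_j≥0} ζ(k_1+c_1,…,k_n+c_n) ] λ^l converges absolutely and equals f((a_i,b_i)_{i=1}^s;λ). -/

import Mathlib

/-- Strictly decreasing tuples `m 0 > m 1 > ⋯ > m (N-1) ≥ 1` of positive integers,
padded by `0` from position `N` on. -/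
def DecTuple (N : ℕ) : Set (ℕ → ℕ) :=
  {m | (∀ j, j + 1 < N → m (j + 1) < m j) ∧ (∀ j, j < N → 1 ≤ m j) ∧ ∀ j, N ≤ j → m j = 0}

/-- The multiple zeta value `ζ(k₁,…,kₙ)` for an index given as a list. -/
noncomputable def mzvL (k : List ℕ) : ℂ :=
  ∑' m : DecTuple k.length, ∏ i ∈ Finset.range k.length, ((m.1 i : ℂ) ^ k.getD i 0)⁻¹

/-- The generating function `f((aᵢ,bᵢ)ᵢ₌₁ˢ;λ)` of the Ohno sums:
`Σ_{m₁>⋯>m_{B_s}≥1} Π_i m_{B_{i-1}+1}^{-aᵢ} Π_{j=B_{i-1}+1}^{B_i} (m_j-λ)⁻¹`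
(indices are 0-based here, so `B_{i-1}` is `∑_{t<i} b t`). -/
noncomputable def genF (s : ℕ) (a b : ℕ → ℕ) (lam : ℂ) : ℂ :=
  ∑' m : DecTuple (∑ j ∈ Finset.range s, b j),
    ∏ i ∈ Finset.range s,
      ((m.1 (∑ t ∈ Finset.range i, b t) : ℂ) ^ a i)⁻¹ *
        ∏ j ∈ Finset.Ico (∑ t ∈ Finset.range i, b t) (∑ t ∈ Finset.range (i + 1), b t),
          ((m.1 j : ℂ) - lam)⁻¹

/-- The index `κ((aᵢ,bᵢ)ᵢ₌₁ˢ) = (a₁+1,1^{b₁-1},…,a_s+1,1^{b_s-1})` attached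
to a composition of pairs (0-based). -/
def kappa (s : ℕ) (a b : ℕ → ℕ) : List ℕ :=
  (List.range s).flatMap fun i => (a i + 1) :: List.replicate (b i - 1) 1

/-- The Ohno sum `Σ_{c₁+⋯+cₙ=l, cⱼ≥0} ζ(k₁+c₁,…,kₙ+cₙ)`. -/
noncomputable def ohnoSum (k : List ℕ) (l : ℕ) : ℂ :=
  ∑ c ∈ Finset.Nat.antidiagonalTuple k.length l,
    mzvL (List.ofFn fun i : Fin k.length => k.getD i.1 0 + c i)


open Finset

/-- Product over a finite index of single-variable functions, as a function on tuples. -/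
def piProd {R : Type*} [CommMonoid R] {N : ℕ} (g : Fin N → ℕ → R) (c : Fin N → ℕ) : R :=
  ∏ j, g j (c j)

lemma piProd_apply {R : Type*} [CommMonoid R] {N : ℕ} (g : Fin N → ℕ → R) (c : Fin N → ℕ) :
    piProd g c = ∏ j, g j (c j) := rfl

/-- Product of two absolutely summable families over a product type. -/
lemma aux_mul_summable_tsum {R : Type*} [NormedRing R] [CompleteSpace R] {ι ι' : Type*}
    (f : ι → R) (h : ι' → R) (hf : Summable fun x => ‖f x‖) (hh : Summable fun x => ‖h x‖) :
    (Summable fun p : ι × ι' => ‖f p.1 * h p.2‖) ∧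
      (∑' p : ι × ι', f p.1 * h p.2) = (∑' x, f x) * ∑' y, h y :=
  ⟨hf.mul_norm hh, (tsum_mul_tsum_of_summable_norm hf hh).symm⟩

/-- Infinite sum of products over Pi type: summability and factorization. -/
lemma pi_prod_summable_tsum {R : Type*} [NormedCommRing R] [CompleteSpace R] :
    ∀ (N : ℕ) (g : Fin N → ℕ → R), (∀ j, Summable fun c => ‖g j c‖) →
      (Summable fun c : Fin N → ℕ => ‖piProd g c‖) ∧
        ∑' c : Fin N → ℕ, piProd g c = ∏ j, ∑' x, g j x := by
  intro N
  induction N with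
  | zero =>
    intro g _
    haveI : Subsingleton (Fin 0 → ℕ) := ⟨fun f g => funext fun i => i.elim0⟩
    haveI : Finite (Fin 0 → ℕ) := Finite.of_subsingleton
    constructor
    · exact Summable.of_finite
    · rw [tsum_eq_single (fun i => i.elim0) (fun b hb => (hb (Subsingleton.elim _ _)).elim)]
      simp [piProd]
  | succ N ih =>
    intro g hg
    obtain ⟨hs, ht⟩ := ih (fun j => g j.succ) (fun j => hg j.succ)
    set e := Fin.consEquiv (fun _ : Fin (N + 1) => ℕ) with he
    have key : ∀ p : ℕ × (Fin N → ℕ),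
        piProd g (e p) = g 0 p.1 * piProd (fun j => g j.succ) p.2 := by
      intro p
      rw [piProd_apply, piProd_apply, Fin.prod_univ_succ]
      simp [he, Fin.consEquiv]
    obtain ⟨hmul, hteq⟩ := aux_mul_summable_tsum (g 0)
      (piProd (fun j => g j.succ)) (hg 0) hs
    constructor
    · rw [← e.summable_iff]
      apply hmul.congr
      intro p
      simp only [Function.comp_apply]
      rw [key p]
    · rw [← e.tsum_eq]
      calc ∑' p : ℕ × (Fin N → ℕ), piProd g (e p)
          = ∑' p : ℕ × (Fin N → ℕ), g 0 p.1 * piProd (fun j => g j.succ) p.2 := tsum_congr key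
        _ = (∑' x, g 0 x) * ∑' c : Fin N → ℕ, piProd (fun j => g j.succ) c := hteq
        _ = ∏ j, ∑' x, g j x := by rw [Fin.prod_univ_succ, ht]

/-- Elements of a decreasing tuple are bounded by the first. -/
lemma decTuple_le_head {N : ℕ} (m : DecTuple N) : ∀ j, j < N → m.1 j ≤ m.1 0 := by
  intro j
  induction j with
  | zero => intro _; exact le_rfl
  | succ j ih => intro h; exact le_trans (m.2.1 j h).le (ih (Nat.lt_of_succ_lt h))

lemma summable_decTuple {N : ℕ} (hN : 1 ≤ N) (K : ℕ → ℕ) (hK0 : 2 ≤ K 0)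
    (hK : ∀ j, j < N → 1 ≤ K j) :
    Summable fun m : DecTuple N => ∏ j ∈ Finset.range N, (((m.1 j : ℝ)) ^ K j)⁻¹ := by
  set p : ℝ := 1 + 1 / N with hp
  have hppos : (0:ℝ) < 1 / N := by
    have : (0:ℝ) < N := by exact_mod_cast hN
    positivity
  -- single coordinate comparison function
  have h1 : Summable fun x : ℕ => (((x : ℝ) + 1) ^ p)⁻¹ := by
    have h0 : Summable fun n : ℕ => (n : ℝ) ^ (-p) := by
      rw [Real.summable_nat_rpow, hp]
      linarith
    have h2 : Summable fun x : ℕ => ((x + 1 : ℕ) : ℝ) ^ (-p) :=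
      h0.comp_injective fun x y h => by omega
    apply h2.congr
    intro x
    push_cast
    rw [Real.rpow_neg (by positivity)]
  have hG : Summable fun v : Fin N → ℕ => ∏ j, (((v j : ℝ) + 1) ^ p)⁻¹ := by
    have h3 := (pi_prod_summable_tsum N (fun _ x => (((x : ℝ) + 1) ^ p)⁻¹)
      (fun _ => h1.congr fun x => (Real.norm_of_nonneg (by positivity)).symm)).1
    apply h3.congr
    intro v
    rw [piProd_apply]
    exact Real.norm_of_nonneg (Finset.prod_nonneg fun j _ => by positivity)
  -- injection
  set ι : DecTuple N → (Fin N → ℕ) := fun m j => m.1 j - 1 with hι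
  have hinj : Function.Injective ι := by
    intro m m' h
    apply Subtype.ext; funext j
    rcases lt_or_ge j N with hj | hj
    · have h1m := m.2.2.1 j hj
      have h1m' := m'.2.2.1 j hj
      have h3 : m.1 j - 1 = m'.1 j - 1 := congrFun h ⟨j, hj⟩
      omega
    · rw [m.2.2.2 j hj, m'.2.2.2 j hj]
  have hcomp : Summable ((fun v : Fin N → ℕ => ∏ j, (((v j : ℝ) + 1) ^ p)⁻¹) ∘ ι) :=
    hG.comp_injective hinj
  apply Summable.of_nonneg_of_le (fun m => Finset.prod_nonneg fun j _ => by positivity) _ hcomp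
  intro m
  have hm1 : ∀ j, j < N → 1 ≤ m.1 j := m.2.2.1
  have hval : ∀ j : Fin N, ((ι m j : ℝ) + 1) = (m.1 j : ℝ) := by
    intro j
    have h4 := hm1 j j.2
    have h5 : (m.1 (j:ℕ) - 1 : ℕ) + 1 = m.1 (j:ℕ) := Nat.sub_add_cancel h4
    simp only [hι]
    exact_mod_cast congrArg (Nat.cast (R := ℝ)) h5
  simp only [Function.comp_apply]
  rw [Finset.prod_congr rfl fun j (_ : j ∈ Finset.univ) => by rw [hval j]]
  -- now goal: ∏ j ∈ range N, ((m j)^K j)⁻¹ ≤ ∏ j : Fin N, ((m j : ℝ) ^ p)⁻¹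
  rw [← Fin.prod_univ_eq_prod_range (fun j => (((m.1 j : ℝ)) ^ K j)⁻¹) N]
  rw [Finset.prod_inv_distrib, Finset.prod_inv_distrib]
  have hpos : ∀ j : Fin N, (0:ℝ) < (m.1 j : ℝ) := fun j => by
    exact_mod_cast Nat.lt_of_lt_of_le Nat.zero_lt_one (hm1 j j.2)
  have hge1 : ∀ j : Fin N, (1:ℝ) ≤ (m.1 j : ℝ) := fun j => by exact_mod_cast hm1 j j.2
  apply inv_anti₀
  · exact Finset.prod_pos fun j _ => Real.rpow_pos_of_pos (hpos j) _
  -- ∏ (m j)^p ≤ ∏ (m j)^(K j)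
  set P : ℝ := ∏ j : Fin N, (m.1 j : ℝ) with hP
  have hPpos : 0 < P := Finset.prod_pos fun j _ => hpos j
  have hN0 : (0:ℝ) < N := by exact_mod_cast hN
  have hprodp : ∏ j : Fin N, (m.1 j : ℝ) ^ p = P * P ^ (1 / (N:ℝ)) := by
    have h6 : ∀ j : Fin N, (m.1 j : ℝ) ^ p = (m.1 j : ℝ) * (m.1 j : ℝ) ^ (1 / (N:ℝ)) := by
      intro j
      rw [hp, Real.rpow_add (hpos j), Real.rpow_one]
    rw [Finset.prod_congr rfl fun j _ => h6 j, Finset.prod_mul_distrib,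
      Real.finset_prod_rpow _ _ (fun j _ => (hpos j).le), ← hP]
  rw [hprodp]
  have hm0N : 0 < N := hN
  have hPm0 : P ^ (1 / (N:ℝ)) ≤ (m.1 0 : ℝ) := by
    have hle : P ≤ (m.1 0 : ℝ) ^ (N : ℕ) := by
      have hc : ∏ _j : Fin N, (m.1 0 : ℝ) = (m.1 0 : ℝ) ^ (N : ℕ) := by
        rw [Finset.prod_const, Finset.card_univ, Fintype.card_fin]
      rw [hP, ← hc]
      apply Finset.prod_le_prod (fun j _ => (hpos j).le)
      intro j _
      exact_mod_cast decTuple_le_head m j j.2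
    calc P ^ (1 / (N:ℝ)) ≤ ((m.1 0 : ℝ) ^ (N:ℕ)) ^ (1 / (N:ℝ)) :=
          Real.rpow_le_rpow hPpos.le hle (by positivity)
      _ = (m.1 0 : ℝ) := by
          rw [← Real.rpow_natCast (m.1 0 : ℝ) N, ← Real.rpow_mul (by positivity),
            mul_one_div_cancel (ne_of_gt hN0), Real.rpow_one]
  have hKge : (m.1 0 : ℝ) * P ≤ ∏ j : Fin N, (m.1 j : ℝ) ^ K j := by
    have hsplit : ∀ j : Fin N, (m.1 j : ℝ) ^ K (j:ℕ) =
        (m.1 j : ℝ) ^ (K (j:ℕ) - 1) * (m.1 j : ℝ) := by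
      intro j
      rw [← pow_succ, Nat.sub_add_cancel (hK j j.2)]
    rw [Finset.prod_congr rfl fun j _ => hsplit j, Finset.prod_mul_distrib, ← hP]
    apply mul_le_mul_of_nonneg_right _ hPpos.le
    have hstep : (m.1 0 : ℝ) ≤ (m.1 0 : ℝ) ^ (K 0 - 1) := by
      calc (m.1 0 : ℝ) = (m.1 0 : ℝ) ^ 1 := (pow_one _).symm
        _ ≤ (m.1 0 : ℝ) ^ (K 0 - 1) := by
            apply pow_le_pow_right₀ (by exact_mod_cast hm1 0 hm0N)
            omega
    calc (m.1 0 : ℝ) ≤ (m.1 0 : ℝ) ^ (K 0 - 1) := hstep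
      _ = ∏ j : Fin N, (if j = (⟨0, hm0N⟩ : Fin N) then (m.1 0 : ℝ) ^ (K 0 - 1) else 1) := by
          rw [Finset.prod_ite_eq' Finset.univ (⟨0, hm0N⟩ : Fin N)
            (fun _ => (m.1 0 : ℝ) ^ (K 0 - 1)), if_pos (Finset.mem_univ _)]
      _ ≤ ∏ j : Fin N, (m.1 j : ℝ) ^ (K (j:ℕ) - 1) := by
          apply Finset.prod_le_prod
          · intro j _; positivity
          · intro j _
            by_cases hj : j = (⟨0, hm0N⟩ : Fin N)
            · subst hj; simp
            · rw [if_neg hj]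
              exact one_le_pow₀ (hge1 j)
  calc P * P ^ (1 / (N:ℝ)) ≤ P * (m.1 0 : ℝ) := by
        exact mul_le_mul_of_nonneg_left hPm0 hPpos.le
    _ = (m.1 0 : ℝ) * P := mul_comm _ _
    _ ≤ ∏ j : Fin N, (m.1 j : ℝ) ^ K j := hKge
lemma kappa_length (s : ℕ) (a b : ℕ → ℕ) (hb : ∀ i, i < s → 1 ≤ b i) :
    (kappa s a b).length = ∑ i ∈ Finset.range s, b i := by
  induction s with
  | zero => simp [kappa]
  | succ s ih =>
    have ih' := ih fun i hi => hb i (Nat.lt_succ_of_lt hi)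
    have hbs := hb s (Nat.lt_succ_self s)
    simp only [kappa, List.range_succ, List.flatMap_append, List.length_append,
      Finset.sum_range_succ] at ih' ⊢
    rw [ih']
    simp only [List.flatMap_cons, List.flatMap_nil, List.append_nil, List.length_cons,
      List.length_replicate]
    omega

lemma kappa_append (s : ℕ) (a b : ℕ → ℕ) :
    kappa (s + 1) a b = kappa s a b ++ ((a s + 1) :: List.replicate (b s - 1) 1) := by
  simp [kappa, List.range_succ, List.flatMap_append]

lemma kappa_getD (s : ℕ) (a b : ℕ → ℕ) (hb : ∀ i, i < s → 1 ≤ b i) :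
    ∀ i, i < s → ∀ j, ∑ t ∈ Finset.range i, b t ≤ j → j < ∑ t ∈ Finset.range (i + 1), b t →
      (kappa s a b).getD j 0 = if j = ∑ t ∈ Finset.range i, b t then a i + 1 else 1 := by
  induction s with
  | zero => intro i hi; omega
  | succ s ih =>
    intro i hi j h1 h2
    have hlen : (kappa s a b).length = ∑ t ∈ Finset.range s, b t :=
      kappa_length s a b fun t ht => hb t (Nat.lt_succ_of_lt ht)
    rcases Nat.lt_or_ge i s with his | his
    · have hj : j < (kappa s a b).length := by
        rw [hlen]
        calc j < ∑ t ∈ Finset.range (i + 1), b t := h2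
          _ ≤ ∑ t ∈ Finset.range s, b t :=
            Finset.sum_le_sum_of_subset (Finset.range_subset_range.mpr his)
      rw [kappa_append, List.getD_append _ _ _ _ hj]
      exact ih (fun t ht => hb t (Nat.lt_succ_of_lt ht)) i his j h1 h2
    · have his' : i = s := by omega
      rw [his'] at h1 h2 ⊢
      have hj : (kappa s a b).length ≤ j := by rw [hlen]; exact h1
      have hsum := Finset.sum_range_succ b s
      have hbs := hb s (Nat.lt_succ_self s)
      rw [kappa_append, List.getD_append_right _ _ _ _ hj, hlen]
      rcases Nat.eq_or_lt_of_le h1 with he | hlt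
      · rw [if_pos he.symm, ← he, Nat.sub_self]
        rfl
      · rw [if_neg (by omega)]
        have hd : j - ∑ t ∈ Finset.range s, b t = (j - ∑ t ∈ Finset.range s, b t - 1) + 1 := by
          omega
        have hlt2 : j - ∑ t ∈ Finset.range s, b t - 1 < b s - 1 := by omega
        rw [hd, List.getD_cons_succ,
          List.getD_eq_getElem _ _ (by simpa using hlt2), List.getElem_replicate]

lemma exists_block (s : ℕ) (b : ℕ → ℕ) : ∀ j, j < ∑ t ∈ Finset.range s, b t →
    ∃ i, i < s ∧ ∑ t ∈ Finset.range i, b t ≤ j ∧ j < ∑ t ∈ Finset.range (i + 1), b t := by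
  induction s with
  | zero => intro j hj; simp at hj
  | succ s ih =>
    intro j hj
    rcases Nat.lt_or_ge j (∑ t ∈ Finset.range s, b t) with h | h
    · obtain ⟨i, g1, g2, g3⟩ := ih j h
      exact ⟨i, Nat.lt_succ_of_lt g1, g2, g3⟩
    · exact ⟨s, Nat.lt_succ_self s, h, by rwa [Finset.sum_range_succ] at hj ⊢⟩

lemma geom_aux (m : ℕ) (hm : 1 ≤ m) (k : ℕ) (lam : ℂ) (hlam : ‖lam‖ < 1) :
    (Summable fun c : ℕ => ‖((m : ℂ) ^ (k + 1 + c))⁻¹ * lam ^ c‖) ∧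
      ∑' c : ℕ, ((m : ℂ) ^ (k + 1 + c))⁻¹ * lam ^ c
        = ((m : ℂ) ^ k)⁻¹ * ((m : ℂ) - lam)⁻¹ := by
  have hm1 : (1 : ℝ) ≤ (m : ℝ) := by exact_mod_cast hm
  have hm0 : (m : ℂ) ≠ 0 := by
    intro h
    rw [Nat.cast_eq_zero] at h
    omega
  have hmC : ‖(m : ℂ)‖ = (m : ℝ) := by
    rw [Complex.norm_natCast]
  have hr : ‖lam / (m : ℂ)‖ < 1 := by
    rw [norm_div, hmC]
    calc ‖lam‖ / (m : ℝ) ≤ ‖lam‖ := by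
          apply div_le_self (norm_nonneg _) hm1
      _ < 1 := hlam
  have hterm : ∀ c : ℕ, ((m : ℂ) ^ (k + 1 + c))⁻¹ * lam ^ c
      = (((m : ℂ) ^ k)⁻¹ * (m : ℂ)⁻¹) * (lam / (m : ℂ)) ^ c := by
    intro c
    rw [div_pow, pow_add, pow_add, pow_one]
    field_simp
  have hne : (m : ℂ) - lam ≠ 0 := by
    intro h
    have h2 : (m : ℂ) = lam := sub_eq_zero.mp h
    rw [← h2, hmC] at hlam
    linarith
  constructor
  · apply Summable.congr _ (fun c => congrArg norm (hterm c).symm)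
    apply Summable.congr (f := fun c : ℕ =>
      ‖((m : ℂ) ^ k)⁻¹ * (m : ℂ)⁻¹‖ * ‖lam / (m : ℂ)‖ ^ c)
    · exact (summable_geometric_of_lt_one (norm_nonneg _) hr).mul_left _
    · intro c
      simp [norm_mul, norm_pow]
  · rw [tsum_congr hterm, tsum_mul_left, tsum_geometric_of_norm_lt_one hr, mul_assoc,
      ← mul_inv]
    congr 1
    field_simp
lemma prod_range_blocks {M : Type*} [CommMonoid M] (s : ℕ) (b : ℕ → ℕ) (f : ℕ → M) :
    ∏ j ∈ Finset.range (∑ t ∈ Finset.range s, b t), f j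
      = ∏ i ∈ Finset.range s, ∏ j ∈ Finset.Ico (∑ t ∈ Finset.range i, b t)
          (∑ t ∈ Finset.range (i + 1), b t), f j := by
  induction s with
  | zero => simp
  | succ s ih =>
    have hle : (∑ t ∈ Finset.range s, b t) ≤ ∑ t ∈ Finset.range (s + 1), b t := by
      rw [Finset.sum_range_succ]; omega
    rw [Finset.prod_range_succ, ← ih, Finset.prod_range_mul_prod_Ico f hle]

lemma tsum_decTuple_congr {N N' : ℕ} (h : N = N') (f : (ℕ → ℕ) → ℂ) :
    ∑' m : DecTuple N, f m.1 = ∑' m : DecTuple N', f m.1 := by subst h; rfl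

lemma mzvL_ofFn {n : ℕ} (f : Fin n → ℕ) :
    mzvL (List.ofFn f) = ∑' m : DecTuple n, ∏ i : Fin n, ((m.1 i : ℂ) ^ f i)⁻¹ := by
  have hl : (List.ofFn f).length = n := List.length_ofFn
  rw [mzvL.eq_def, hl]
  refine tsum_congr fun m => ?_
  rw [← Fin.prod_univ_eq_prod_range (fun i => ((m.1 i : ℂ) ^ ((List.ofFn f).getD i 0))⁻¹) n]
  refine Finset.prod_congr rfl fun i _ => ?_
  congr 2
  rw [List.getD_eq_getElem _ _ (by rw [hl]; exact i.2), List.getElem_ofFn]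

lemma ohnoSum_apply (k : List ℕ) (l : ℕ) :
    ohnoSum k l = ∑ c ∈ Finset.Nat.antidiagonalTuple k.length l,
      mzvL (List.ofFn fun i : Fin k.length => k.getD i.1 0 + c i) := rfl

/-- The master summand `λ^{Σc} Π_j m_j^{-(K_j+c_j)}`. -/
noncomputable def ohnoT (N : ℕ) (K : ℕ → ℕ) (lam : ℂ) (p : DecTuple N × (Fin N → ℕ)) : ℂ :=
  ∏ j : Fin N, (((p.1.1 j : ℂ) ^ (K j + p.2 j))⁻¹ * lam ^ p.2 j)

lemma ohnoT_apply (N : ℕ) (K : ℕ → ℕ) (lam : ℂ) (m : DecTuple N) (c : Fin N → ℕ) :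
    ohnoT N K lam (m, c) = ∏ j : Fin N, (((m.1 j : ℂ) ^ (K j + c j))⁻¹ * lam ^ c j) := rfl

noncomputable def ohnoV (N : ℕ) (K : ℕ → ℕ) (lam : ℂ) (c : Fin N → ℕ) : ℂ :=
  ∑' m : DecTuple N, ohnoT N K lam (m, c)

noncomputable def ohnoVN (N : ℕ) (K : ℕ → ℕ) (lam : ℂ) (c : Fin N → ℕ) : ℝ :=
  ∑' m : DecTuple N, ‖ohnoT N K lam (m, c)‖

noncomputable def decBound (N : ℕ) (K : ℕ → ℕ) (m : DecTuple N) : ℝ :=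
  ∏ j ∈ Finset.range N, ((m.1 j : ℝ) ^ K j)⁻¹

lemma decBound_apply (N : ℕ) (K : ℕ → ℕ) (m : DecTuple N) :
    decBound N K m = ∏ j ∈ Finset.range N, ((m.1 j : ℝ) ^ K j)⁻¹ := rfl

lemma summable_decBound {N : ℕ} (hN : 1 ≤ N) (K : ℕ → ℕ) (hK0 : 2 ≤ K 0)
    (hK : ∀ j, j < N → 1 ≤ K j) : Summable (decBound N K) :=
  summable_decTuple hN K hK0 hK

noncomputable def geoBound (r : ℝ) (N : ℕ) : (Fin N → ℕ) → ℝ :=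
  piProd fun _ x => r ^ x

lemma geoBound_apply (r : ℝ) (N : ℕ) (c : Fin N → ℕ) :
    geoBound r N c = ∏ j : Fin N, r ^ c j := rfl

lemma summable_geoBound {r : ℝ} (h0 : 0 ≤ r) (h1 : r < 1) (N : ℕ) :
    Summable (geoBound r N) := by
  have hg : ∀ _j : Fin N, Summable fun x : ℕ => ‖r ^ x‖ := by
    intro j
    apply Summable.congr (f := fun x : ℕ => r ^ x)
    · exact summable_geometric_of_lt_one h0 h1
    · intro x
      rw [Real.norm_of_nonneg (pow_nonneg h0 x)]
  have := (pi_prod_summable_tsum N (fun _ x => r ^ x) hg).1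
  apply this.congr
  intro c
  exact Real.norm_of_nonneg
    (by rw [piProd_apply]; exact Finset.prod_nonneg fun j _ => pow_nonneg h0 _)

lemma ohnoV_apply (N : ℕ) (K : ℕ → ℕ) (lam : ℂ) (c : Fin N → ℕ) :
    ohnoV N K lam c = ∑' m : DecTuple N, ohnoT N K lam (m, c) := rfl
theorem genF_eq_tsum_ohnoSum (s : ℕ) (hs : 1 ≤ s) (a b : ℕ → ℕ)
    (ha : ∀ i, i < s → 1 ≤ a i) (hb : ∀ i, i < s → 1 ≤ b i)
    (lam : ℂ) (hlam : ‖lam‖ < 1) :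
    Summable (fun l : ℕ => ‖ohnoSum (kappa s a b) l * lam ^ l‖) ∧
      ∑' l : ℕ, ohnoSum (kappa s a b) l * lam ^ l = genF s a b lam := by
  classical
  set n := (kappa s a b).length with hn
  set K : ℕ → ℕ := fun j => (kappa s a b).getD j 0 with hKdef
  have hlen : n = ∑ i ∈ Finset.range s, b i := by
    rw [hn]; exact kappa_length s a b hb
  have hnpos : 1 ≤ n := by
    rw [hlen]
    calc 1 ≤ b 0 := hb 0 hs
      _ ≤ ∑ i ∈ Finset.range s, b i :=
        Finset.single_le_sum (f := b) (fun i _ => Nat.zero_le _) (Finset.mem_range.mpr hs)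
  have hKblock : ∀ i, i < s → ∀ j, ∑ t ∈ Finset.range i, b t ≤ j →
      j < ∑ t ∈ Finset.range (i + 1), b t →
      K j = if j = ∑ t ∈ Finset.range i, b t then a i + 1 else 1 := by
    intro i hi j h1 h2
    rw [hKdef]
    exact kappa_getD s a b hb i hi j h1 h2
  have hK1 : ∀ j, j < n → 1 ≤ K j := by
    intro j hj
    rw [hlen] at hj
    obtain ⟨i, hi, g1, g2⟩ := exists_block s b j hj
    rw [hKblock i hi j g1 g2]
    split <;> omega
  have hK0 : 2 ≤ K 0 := by
    obtain ⟨i, hi, g1, g2⟩ := exists_block s b 0 (by rw [← hlen]; omega)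
    have hBi : ∑ t ∈ Finset.range i, b t = 0 := Nat.le_zero.mp g1
    rw [hKblock i hi 0 g1 g2, if_pos hBi.symm]
    have := ha i hi
    omega
  have hm1 : ∀ (m : DecTuple n) (j : Fin n), 1 ≤ m.1 j := fun m j => m.2.2.1 j j.2
  -- summability of the master family
  have hTbound : ∀ p : DecTuple n × (Fin n → ℕ),
      ‖ohnoT n K lam p‖ ≤ decBound n K p.1 * geoBound ‖lam‖ n p.2 := by
    rintro ⟨m, c⟩
    rw [ohnoT_apply, decBound_apply, geoBound_apply, norm_prod,
      ← Fin.prod_univ_eq_prod_range (fun j => ((m.1 j : ℝ) ^ K j)⁻¹) n,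
      ← Finset.prod_mul_distrib]
    apply Finset.prod_le_prod (fun j _ => norm_nonneg _)
    intro j _
    rw [norm_mul, norm_inv, norm_pow, norm_pow, Complex.norm_natCast]
    apply mul_le_mul_of_nonneg_right _ (pow_nonneg (norm_nonneg _) _)
    have hmj : (1 : ℝ) ≤ (m.1 j : ℝ) := by exact_mod_cast hm1 m j
    apply inv_anti₀
    · apply pow_pos; linarith
    · exact pow_le_pow_right₀ hmj (Nat.le_add_right _ _)
  have hTn : Summable fun p : DecTuple n × (Fin n → ℕ) => ‖ohnoT n K lam p‖ := by
    apply Summable.of_nonneg_of_le (fun p => norm_nonneg _) hTbound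
    apply Summable.mul_of_nonneg (summable_decBound hnpos K hK0 hK1)
      (summable_geoBound (norm_nonneg lam) hlam n)
    · intro m
      rw [decBound_apply]
      exact Finset.prod_nonneg fun j _ => by positivity
    · intro c
      rw [geoBound_apply]
      exact Finset.prod_nonneg fun j _ => pow_nonneg (norm_nonneg _) _
  have hT : Summable (ohnoT n K lam) := hTn.of_norm
  -- inner geometric evaluation
  have hinner : ∀ m : DecTuple n,
      (∑' c : Fin n → ℕ, ohnoT n K lam (m, c))
        = ∏ j : Fin n, (((m.1 j : ℂ) ^ (K (j : ℕ) - 1))⁻¹ * ((m.1 j : ℂ) - lam)⁻¹) := by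
    intro m
    have hoT : ∀ c : Fin n → ℕ, ohnoT n K lam (m, c)
        = piProd (fun (j : Fin n) (x : ℕ) =>
            ((m.1 j : ℂ) ^ (K (j : ℕ) - 1 + 1 + x))⁻¹ * lam ^ x) c := by
      intro c
      rw [ohnoT_apply, piProd_apply]
      refine Finset.prod_congr rfl fun j _ => ?_
      rw [Nat.sub_add_cancel (hK1 j j.2)]
    obtain ⟨hps, hpt⟩ := pi_prod_summable_tsum n
      (fun (j : Fin n) (x : ℕ) => ((m.1 j : ℂ) ^ (K (j : ℕ) - 1 + 1 + x))⁻¹ * lam ^ x)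
      (fun j => (geom_aux (m.1 j) (hm1 m j) (K (j : ℕ) - 1) lam hlam).1)
    rw [tsum_congr hoT, hpt]
    exact Finset.prod_congr rfl fun j _ =>
      (geom_aux (m.1 j) (hm1 m j) (K (j : ℕ) - 1) lam hlam).2
  -- block decomposition
  have hblocks : ∀ m : DecTuple n,
      (∏ j : Fin n, (((m.1 j : ℂ) ^ (K (j : ℕ) - 1))⁻¹ * ((m.1 j : ℂ) - lam)⁻¹))
        = ∏ i ∈ Finset.range s, (((m.1 (∑ t ∈ Finset.range i, b t) : ℂ) ^ a i)⁻¹ *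
            ∏ j ∈ Finset.Ico (∑ t ∈ Finset.range i, b t) (∑ t ∈ Finset.range (i + 1), b t),
              ((m.1 j : ℂ) - lam)⁻¹) := by
    intro m
    rw [Fin.prod_univ_eq_prod_range
      (fun j => (((m.1 j : ℂ) ^ (K j - 1))⁻¹ * ((m.1 j : ℂ) - lam)⁻¹)) n,
      show Finset.range n = Finset.range (∑ t ∈ Finset.range s, b t) from by rw [hlen],
      prod_range_blocks s b (fun j => (((m.1 j : ℂ) ^ (K j - 1))⁻¹ * ((m.1 j : ℂ) - lam)⁻¹))]
    refine Finset.prod_congr rfl fun i hi => ?_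
    rw [Finset.prod_mul_distrib]
    have hi' : i < s := Finset.mem_range.mp hi
    have hBlt : ∑ t ∈ Finset.range i, b t < ∑ t ∈ Finset.range (i + 1), b t := by
      rw [Finset.sum_range_succ]
      have := hb i hi'
      omega
    congr 1
    rw [Finset.prod_eq_single (∑ t ∈ Finset.range i, b t)]
    · rw [hKblock i hi' _ le_rfl hBlt, if_pos rfl, Nat.add_sub_cancel]
    · intro j hj hne
      rw [Finset.mem_Ico] at hj
      rw [hKblock i hi' j hj.1 hj.2, if_neg hne, Nat.sub_self, pow_zero, inv_one]
    · intro hnotmem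
      exact absurd (Finset.mem_Ico.mpr ⟨le_rfl, hBlt⟩) hnotmem
  -- genF in terms of n
  have hgenF : genF s a b lam = ∑' m : DecTuple n,
      ∏ i ∈ Finset.range s, (((m.1 (∑ t ∈ Finset.range i, b t) : ℂ) ^ a i)⁻¹ *
        ∏ j ∈ Finset.Ico (∑ t ∈ Finset.range i, b t) (∑ t ∈ Finset.range (i + 1), b t),
          ((m.1 j : ℂ) - lam)⁻¹) :=
    tsum_decTuple_congr hlen.symm (fun v : ℕ → ℕ =>
      ∏ i ∈ Finset.range s, (((v (∑ t ∈ Finset.range i, b t) : ℂ) ^ a i)⁻¹ *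
        ∏ j ∈ Finset.Ico (∑ t ∈ Finset.range i, b t) (∑ t ∈ Finset.range (i + 1), b t),
          ((v j : ℂ) - lam)⁻¹))
  -- fiberwise sums
  have hswap : Summable fun q : (Fin n → ℕ) × DecTuple n => ohnoT n K lam q.swap :=
    hT.prod_symm
  have hswapN : Summable fun q : (Fin n → ℕ) × DecTuple n => ‖ohnoT n K lam q.swap‖ :=
    hTn.prod_symm
  have hVsum : Summable (ohnoV n K lam) := hswap.prod.congr fun c => rfl
  have hVNsum : Summable (ohnoVN n K lam) := hswapN.prod.congr fun c => rfl
  have hVfiber : ∀ c, Summable fun m : DecTuple n => ‖ohnoT n K lam (m, c)‖ :=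
    fun c => (hswapN.prod_factor c).congr fun m => rfl
  have hVle : ∀ c, ‖ohnoV n K lam c‖ ≤ ohnoVN n K lam c :=
    fun c => norm_tsum_le_tsum_norm (hVfiber c)
  set e := Finset.Nat.sigmaAntidiagonalTupleEquivTuple n with he
  have hVe : Summable fun σ : Σ l : ℕ, {x // x ∈ Finset.Nat.antidiagonalTuple n l} =>
      ohnoV n K lam (e σ) := e.summable_iff.mpr hVsum
  have hVNe : Summable fun σ : Σ l : ℕ, {x // x ∈ Finset.Nat.antidiagonalTuple n l} =>
      ohnoVN n K lam (e σ) := e.summable_iff.mpr hVNsum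
  -- Ohno sums as fiber sums
  have hOS : ∀ l : ℕ, ohnoSum (kappa s a b) l
      = ∑ c ∈ Finset.Nat.antidiagonalTuple n l,
          mzvL (List.ofFn fun i : Fin n => K i.1 + c i) := by
    intro l
    simp only [hn, hKdef]
    exact ohnoSum_apply (kappa s a b) l
  have hW : ∀ l : ℕ, ohnoSum (kappa s a b) l * lam ^ l
      = ∑' c : {x // x ∈ Finset.Nat.antidiagonalTuple n l}, ohnoV n K lam ↑c := by
    intro l
    rw [hOS l, Finset.tsum_subtype, Finset.sum_mul]
    refine Finset.sum_congr rfl fun c hc => ?_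
    have hcl : ∑ i, c i = l := Finset.Nat.mem_antidiagonalTuple.mp hc
    rw [mzvL_ofFn (fun i : Fin n => K i.1 + c i), ohnoV_apply, ← tsum_mul_right]
    refine tsum_congr fun m => ?_
    rw [ohnoT_apply, Finset.prod_mul_distrib, Finset.prod_pow_eq_pow_sum, hcl]
  constructor
  · -- summability of the Ohno power series
    have hVN_l : ∀ l : ℕ, Summable fun c : {x // x ∈ Finset.Nat.antidiagonalTuple n l} =>
        ohnoVN n K lam ↑c := fun l => (hVNe.sigma_factor l).congr fun c => rfl
    have hsub_l : ∀ l : ℕ, Summable fun c : {x // x ∈ Finset.Nat.antidiagonalTuple n l} =>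
        ‖ohnoV n K lam ↑c‖ := fun l =>
      Summable.of_nonneg_of_le (fun c => norm_nonneg _) (fun c => hVle _) (hVN_l l)
    apply Summable.of_nonneg_of_le (fun l => norm_nonneg _) _ hVNe.sigma
    intro l
    calc ‖ohnoSum (kappa s a b) l * lam ^ l‖
        = ‖∑' c : {x // x ∈ Finset.Nat.antidiagonalTuple n l}, ohnoV n K lam ↑c‖ := by
          rw [hW l]
      _ ≤ ∑' c : {x // x ∈ Finset.Nat.antidiagonalTuple n l}, ‖ohnoV n K lam ↑c‖ :=
          norm_tsum_le_tsum_norm (hsub_l l)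
      _ ≤ ∑' c : {x // x ∈ Finset.Nat.antidiagonalTuple n l}, ohnoVN n K lam ↑c :=
          Summable.tsum_le_tsum (fun c => hVle _) (hsub_l l) (hVN_l l)
      _ = ∑' c : {x // x ∈ Finset.Nat.antidiagonalTuple n l}, ohnoVN n K lam (e ⟨l, c⟩) :=
          tsum_congr fun c => rfl
  · -- the tsum identity
    calc ∑' l : ℕ, ohnoSum (kappa s a b) l * lam ^ l
        = ∑' (l : ℕ) (c : {x // x ∈ Finset.Nat.antidiagonalTuple n l}),
            ohnoV n K lam ↑c := tsum_congr fun l => hW l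
      _ = ∑' σ : Σ l : ℕ, {x // x ∈ Finset.Nat.antidiagonalTuple n l},
            ohnoV n K lam (e σ) := (Summable.tsum_sigma hVe).symm
      _ = ∑' c : Fin n → ℕ, ohnoV n K lam c := e.tsum_eq (ohnoV n K lam)
      _ = ∑' q : (Fin n → ℕ) × DecTuple n, ohnoT n K lam q.swap := (Summable.tsum_prod hswap).symm
      _ = ∑' p : DecTuple n × (Fin n → ℕ), ohnoT n K lam p :=
          (Equiv.prodComm (Fin n → ℕ) (DecTuple n)).tsum_eq (ohnoT n K lam)
      _ = ∑' (m : DecTuple n) (c : Fin n → ℕ), ohnoT n K lam (m, c) := Summable.tsum_prod hT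
      _ = ∑' m : DecTuple n,
            ∏ i ∈ Finset.range s, (((m.1 (∑ t ∈ Finset.range i, b t) : ℂ) ^ a i)⁻¹ *
              ∏ j ∈ Finset.Ico (∑ t ∈ Finset.range i, b t) (∑ t ∈ Finset.range (i + 1), b t),
                ((m.1 j : ℂ) - lam)⁻¹) :=
          tsum_congr fun m => by rw [hinner m, hblocks m]
      _ = genF s a b lam := hgenF.symm
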